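/- The mass of the finite state projection solution is non-increasing in time: if A^Ω is a Metzler matrix whose column sums are all ≤ 0 and P₀ ≥ 0, then t ↦ ∑_{x∈Ω} (exp(tA^Ω)P₀)(x) is non-increasing; in particular ∑_x P^Ω(t,x) ≤ ∑_x P₀(x). -/

import Mathlib

open Matrix

attribute [local instance] Matrix.linftyOpNormedRing Matrix.linftyOpNormedAlgebra

section aux

variable {Ω : Type*} [Fintype Ω] [DecidableEq Ω]

private lemma pow_entry_nonneg (M : Matrix Ω Ω ℝ) (hM : ∀ i j, 0 ≤ M i j) :
    ∀ n : ℕ, ∀ i j, 0 ≤ (M ^ n) i j := by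
  intro n
  induction n with
  | zero => intro i j; simp [Matrix.one_apply]; positivity
  | succ n ih =>
    intro i j
    rw [pow_succ, Matrix.mul_apply]
    exact Finset.sum_nonneg fun k _ => mul_nonneg (ih i k) (hM k j)

private lemma exp_entry_nonneg_of_nonneg (M : Matrix Ω Ω ℝ)
    (hM : ∀ i j, 0 ≤ M i j) (i j : Ω) : 0 ≤ NormedSpace.exp M i j := by
  have hsum : Summable (fun n : ℕ => ((Nat.factorial n : ℝ))⁻¹ • M ^ n) :=
    NormedSpace.expSeries_summable' (𝕂 := ℝ) M
  let φ : Matrix Ω Ω ℝ →L[ℝ] ℝ :=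
    LinearMap.toContinuousLinearMap
      { toFun := fun N => N i j
        map_add' := fun _ _ => rfl
        map_smul' := fun _ _ => rfl }
  have : NormedSpace.exp M i j = ∑' n : ℕ, φ (((Nat.factorial n : ℝ))⁻¹ • M ^ n) := by
    rw [NormedSpace.exp_eq_tsum (𝕂 := ℝ)]
    exact (φ.map_tsum hsum)
  rw [this]
  refine tsum_nonneg fun n => ?_
  simp only [φ, LinearMap.coe_toContinuousLinearMap', LinearMap.coe_mk, AddHom.coe_mk,
    Matrix.smul_apply, smul_eq_mul]
  exact mul_nonneg (by positivity) (pow_entry_nonneg M hM n i j)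

private lemma exp_metzler_nonneg (A : Matrix Ω Ω ℝ)
    (hMetzler : ∀ i j, i ≠ j → 0 ≤ A i j) {t : ℝ} (ht : 0 ≤ t) (i j : Ω) :
    0 ≤ NormedSpace.exp (t • A) i j := by
  set c : ℝ := ∑ k, |A k k| with hc
  have hc0 : 0 ≤ c := Finset.sum_nonneg fun k _ => abs_nonneg _
  have hck : ∀ k : Ω, |A k k| ≤ c := fun k =>
    Finset.single_le_sum (f := fun k => |A k k|) (fun l _ => abs_nonneg _) (Finset.mem_univ k)
  set N : Matrix Ω Ω ℝ := t • A + (t * c) • (1 : Matrix Ω Ω ℝ) with hN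
  have hNnn : ∀ a b, 0 ≤ N a b := by
    intro a b
    simp only [hN, Matrix.add_apply, Matrix.smul_apply, smul_eq_mul]
    by_cases h : a = b
    · subst h
      rw [Matrix.one_apply_eq, mul_one]
      nlinarith [hck a, neg_abs_le (A a a)]
    · rw [Matrix.one_apply_ne h, mul_zero, add_zero]
      exact mul_nonneg ht (hMetzler a b h)
  have hsplit : t • A = N + (-(t * c)) • (1 : Matrix Ω Ω ℝ) := by
    simp [hN]
  have hcomm : Commute N ((-(t * c)) • (1 : Matrix Ω Ω ℝ)) :=
    (Commute.one_right N).smul_right _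
  have hexp : NormedSpace.exp (t • A)
      = NormedSpace.exp N * NormedSpace.exp ((-(t * c)) • (1 : Matrix Ω Ω ℝ)) := by
    rw [hsplit]
    exact NormedSpace.exp_add_of_commute hcomm
  have halg : ((-(t * c)) • (1 : Matrix Ω Ω ℝ)) = algebraMap ℝ (Matrix Ω Ω ℝ) (-(t * c)) :=
    (Algebra.algebraMap_eq_smul_one _).symm
  have hexp1 : NormedSpace.exp ((-(t * c)) • (1 : Matrix Ω Ω ℝ))
      = Real.exp (-(t * c)) • (1 : Matrix Ω Ω ℝ) := by
    erw [halg, ← NormedSpace.algebraMap_exp_comm (𝕂 := ℝ) (𝔸 := Matrix Ω Ω ℝ), Algebra.algebraMap_eq_smul_one,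
      Real.exp_eq_exp_ℝ]
  rw [hexp, hexp1]
  have : (NormedSpace.exp N * Real.exp (-(t * c)) • (1 : Matrix Ω Ω ℝ)) i j
      = Real.exp (-(t * c)) * NormedSpace.exp N i j := by
    rw [Matrix.mul_smul, Matrix.mul_one, Matrix.smul_apply, smul_eq_mul]
  rw [this]
  exact mul_nonneg (Real.exp_nonneg _) (exp_entry_nonneg_of_nonneg N hNnn i j)

end aux

/-- for a Metzler sub-generator (non-positive column sums) and
non-negative initial data, the total mass of `exp(tA^Ω)P₀` is non-increasing in
time; in particular it never exceeds the initial mass. -/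
theorem fsp_mass_nonincreasing (Ω : Type*) [Fintype Ω] [DecidableEq Ω]
    (AΩ : Matrix Ω Ω ℝ)
    (hMetzler : ∀ i j, i ≠ j → 0 ≤ AΩ i j)
    (hcols : ∀ j, ∑ i, AΩ i j ≤ 0)
    (P0 : Ω → ℝ) (hP0 : ∀ i, 0 ≤ P0 i) :
    AntitoneOn (fun t : ℝ => ∑ x, (NormedSpace.exp (t • AΩ)).mulVec P0 x)
        (Set.Ici (0 : ℝ)) ∧
      ∀ t : ℝ, 0 ≤ t →
        ∑ x, (NormedSpace.exp (t • AΩ)).mulVec P0 x ≤ ∑ x, P0 x := by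
  set f : ℝ → ℝ := fun t => ∑ x, (NormedSpace.exp (t • AΩ)).mulVec P0 x with hf
  let φ : Matrix Ω Ω ℝ →L[ℝ] ℝ :=
    LinearMap.toContinuousLinearMap
      { toFun := fun M => ∑ x, M.mulVec P0 x
        map_add' := by
          intro M N
          simp [Matrix.add_mulVec, Finset.sum_add_distrib]
        map_smul' := by
          intro r M
          simp [Matrix.smul_mulVec, Finset.mul_sum] }
  have hφ : ∀ M : Matrix Ω Ω ℝ, φ M = ∑ x, M.mulVec P0 x := fun M => rfl
  have hderiv : ∀ t : ℝ, HasDerivAt f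
      (φ (AΩ * NormedSpace.exp (t • AΩ))) t := by
    intro t
    have h1 : HasDerivAt (fun u : ℝ => NormedSpace.exp (u • AΩ))
        (AΩ * NormedSpace.exp (t • AΩ)) t := hasDerivAt_exp_smul_const' AΩ t
    exact (φ.hasFDerivAt.comp_hasDerivAt t h1 :)
  have hderiv_nonpos : ∀ t : ℝ, 0 ≤ t → φ (AΩ * NormedSpace.exp (t • AΩ)) ≤ 0 := by
    intro t ht
    set E := NormedSpace.exp (t • AΩ) with hE
    set v : Ω → ℝ := E.mulVec P0 with hv
    have hvnn : ∀ k, 0 ≤ v k := by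
      intro k
      refine Finset.sum_nonneg fun l _ => mul_nonneg ?_ (hP0 l)
      exact exp_metzler_nonneg AΩ hMetzler ht k l
    have : φ (AΩ * E) = ∑ k, (∑ x, AΩ x k) * v k := by
      rw [hφ]
      have h2 : (AΩ * E).mulVec P0 = AΩ.mulVec v := by
        rw [hv, Matrix.mulVec_mulVec]
      rw [h2]
      simp only [Matrix.mulVec, dotProduct]
      rw [Finset.sum_comm]
      exact Finset.sum_congr rfl fun k _ => (Finset.sum_mul _ _ _).symm
    rw [this]
    refine Finset.sum_nonpos fun k _ => mul_nonpos_of_nonpos_of_nonneg (hcols k) (hvnn k)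
  have hcont : Continuous f := by
    have : Differentiable ℝ f := fun t => (hderiv t).differentiableAt
    exact this.continuous
  have hanti : AntitoneOn f (Set.Ici (0 : ℝ)) := by
    refine antitoneOn_of_deriv_nonpos (convex_Ici 0) hcont.continuousOn ?_ ?_
    · intro t ht
      exact ((hderiv t).differentiableAt).differentiableWithinAt
    · intro t ht
      rw [interior_Ici] at ht
      rw [(hderiv t).deriv]
      exact hderiv_nonpos t (le_of_lt ht)
  refine ⟨hanti, fun t ht => ?_⟩
  have := hanti (Set.self_mem_Ici) ht ht
  simpa [hf, NormedSpace.exp_zero, Matrix.one_mulVec] using this
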